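/- arXiv:1504.03814 — 5 statements merged into one kernel-verified Lean document; each statement's English description precedes it below -/
import Mathlib

section
/- Let {p_m}_{m≥1} and p be probability density functions on ℝ such that: (C1) there exists M ∈ (0,∞) with p_m(y) ≤ M and p(y) ≤ M for all y ∈ ℝ and all m ≥ 1; (C2) there exists a non-negative, non-decreasing function l : [0,∞) → [0,∞) that is super-logarithmic and a finite L > 0 such that ∫ l(|y|) p_m(y) dy ≤ L for all m and ∫ l(|y|) p(y) dy ≤ L. If p_m(y) → p(y) pointwise for every y ∈ ℝ, then the differential entropies converge: h(p_m) → h(p). -/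
open MeasureTheory Real Filter Topology

/-- The differential entropy `h(p) = -∫ p ln p` of a density `p` on `ℝ`
(with the convention `0 ln 0 = 0`, which holds since `Real.log 0 = 0`). -/
noncomputable def diffEntropy (p : ℝ → ℝ) : ℝ := -∫ y, p y * Real.log (p y)

/-- `p` is a probability density function on `ℝ`. -/
def IsPDF (p : ℝ → ℝ) : Prop :=
  Measurable p ∧ (∀ y, 0 ≤ p y) ∧ (∫ y, p y) = 1

/-- `l = ω(ln)`: for every `κ > 0` there is `c > 0` with `l x ≥ κ ln x` for all `x ≥ c`. -/
def SuperLog (l : ℝ → ℝ) : Prop :=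
  ∀ κ : ℝ, 0 < κ → ∃ c : ℝ, 0 < c ∧ ∀ x : ℝ, c ≤ x → κ * Real.log x ≤ l x


lemma neg_mul_log_le_two_sqrt {t : ℝ} (ht : 0 ≤ t) :
    -(t * Real.log t) ≤ 2 * Real.sqrt t := by
  rcases ht.eq_or_lt with h | h
  · simp [← h]
  · have hs : 0 < Real.sqrt t := Real.sqrt_pos.2 h
    have h1 : Real.log ((Real.sqrt t)⁻¹) ≤ (Real.sqrt t)⁻¹ - 1 :=
      Real.log_le_sub_one_of_pos (inv_pos.2 hs)
    rw [Real.log_inv, Real.log_sqrt ht] at h1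
    have h2 : -Real.log t ≤ 2 / Real.sqrt t := by
      rw [div_eq_mul_inv]; linarith
    have h3 : t * (-Real.log t) ≤ t * (2 / Real.sqrt t) :=
      mul_le_mul_of_nonneg_left h2 ht
    have h4 : t * (2 / Real.sqrt t) = 2 * Real.sqrt t := by
      rw [show t * (2 / Real.sqrt t) = 2 * (t / Real.sqrt t) by ring, Real.div_sqrt]
    linarith

lemma mul_log_le_K {t M : ℝ} (h0 : 0 ≤ t) (hM : t ≤ M) :
    t * Real.log t ≤ t * max (Real.log M) 0 := by
  rcases le_or_gt t 1 with h1 | h1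
  · have hlog : Real.log t ≤ 0 := Real.log_nonpos h0 h1
    nlinarith [le_max_right (Real.log M) (0 : ℝ)]
  · have h2 : Real.log t ≤ max (Real.log M) 0 :=
      le_max_iff.2 (Or.inl (Real.log_le_log (by linarith) hM))
    exact mul_le_mul_of_nonneg_left h2 h0

lemma abs_mul_log_le {t M : ℝ} (h0 : 0 ≤ t) (hM : t ≤ M) :
    |t * Real.log t| ≤ M * max (Real.log M) 0 + 1 := by
  have hM0 : 0 ≤ M := h0.trans hM
  have hK : 0 ≤ max (Real.log M) 0 := le_max_right _ _
  have hpos : t * Real.log t ≤ t * max (Real.log M) 0 := mul_log_le_K h0 hM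
  rw [abs_le]
  constructor
  · have hneg : -(t * Real.log t) ≤ 1 := by
      rcases le_or_gt t 1 with h1 | h1
      · rcases h0.eq_or_lt with h | h
        · simp [← h]
        · have hi := Real.log_le_sub_one_of_pos (inv_pos.2 h)
          rw [Real.log_inv] at hi
          have h2 : t * (-Real.log t) ≤ t * (t⁻¹ - 1) :=
            mul_le_mul_of_nonneg_left hi h0
          have h3 : t * (t⁻¹ - 1) = 1 - t := by field_simp
          nlinarith
      · have : 0 ≤ Real.log t := Real.log_nonneg h1.le
        nlinarith
    nlinarith [mul_nonneg hM0 hK]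
  · nlinarith [mul_nonneg hM0 hK, mul_le_mul_of_nonneg_right hM hK]

lemma tail_key
    (M L : ℝ) (hM : 0 < M) (hL : 0 < L)
    (l : ℝ → ℝ) (hl_nonneg : ∀ x : ℝ, 0 ≤ x → 0 ≤ l x)
    (hl_mono : MonotoneOn l (Set.Ici 0))
    (q : ℝ → ℝ) (hq : Measurable q) (h0 : ∀ y, 0 ≤ q y) (hqM : ∀ y, q y ≤ M)
    (hmom : ∫⁻ y, ENNReal.ofReal (l |y| * q y) ≤ ENNReal.ofReal L)
    (κ R : ℝ) (hκ : 0 < κ) (hR1 : 1 ≤ R) (hlR : 0 < l R)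
    (hc : ∀ x : ℝ, R ≤ x → κ * Real.log x ≤ l x) :
    Integrable (fun y => q y * Real.log (q y)) ∧
    ∫ y in (Set.Icc (-R) R)ᶜ, |q y * Real.log (q y)| ≤
      (max (Real.log M) 0 / l R + 4 / κ) * L + 4 / R := by
  have hR0 : 0 < R := lt_of_lt_of_le one_pos hR1
  set K : ℝ := max (Real.log M) 0 with hK_def
  have hK : 0 ≤ K := le_max_right _ _
  set s : Set ℝ := Set.Icc (-R) R with hs_def
  have hs : MeasurableSet s := measurableSet_Icc
  have hmem : ∀ y : ℝ, y ∈ s ↔ |y| ≤ R := by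
    intro y; rw [hs_def, Set.mem_Icc, ← abs_le]
  -- measurability of the moment integrand
  have hl'_mono : Monotone (fun x : ℝ => l (max x 0)) := fun a b hab =>
    hl_mono (Set.mem_Ici.2 (le_max_right a 0)) (Set.mem_Ici.2 (le_max_right b 0))
      (max_le_max hab le_rfl)
  have hlabs_meas : Measurable fun y : ℝ => l |y| := by
    have he : (fun y : ℝ => l |y|) = (fun x => l (max x 0)) ∘ fun y : ℝ => |y| := by
      funext y; simp [Function.comp, max_eq_left (abs_nonneg y)]
    rw [he]; exact hl'_mono.measurable.comp measurable_abs
  have hlq_meas : Measurable fun y : ℝ => l |y| * q y := hlabs_meas.mul hq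
  have hlq_nonneg : ∀ y, 0 ≤ l |y| * q y := fun y =>
    mul_nonneg (hl_nonneg _ (abs_nonneg y)) (h0 y)
  have hlq_int : Integrable (fun y : ℝ => l |y| * q y) := by
    refine ⟨hlq_meas.aestronglyMeasurable, ?_⟩
    rw [hasFiniteIntegral_iff_ofReal (Filter.Eventually.of_forall hlq_nonneg)]
    exact lt_of_le_of_lt hmom ENNReal.ofReal_lt_top
  have hlq_tail : ∫ y in sᶜ, l |y| * q y ≤ L := by
    have h1 : ∫ y in sᶜ, l |y| * q y
        = (∫⁻ y in sᶜ, ENNReal.ofReal (l |y| * q y)).toReal :=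
      integral_eq_lintegral_of_nonneg_ae (Filter.Eventually.of_forall hlq_nonneg)
        hlq_meas.aestronglyMeasurable
    rw [h1]
    have h2 : (∫⁻ y in sᶜ, ENNReal.ofReal (l |y| * q y)) ≤ ENNReal.ofReal L :=
      le_trans (setLIntegral_le_lintegral _ _) hmom
    calc (∫⁻ y in sᶜ, ENNReal.ofReal (l |y| * q y)).toReal
        ≤ (ENNReal.ofReal L).toReal := ENNReal.toReal_mono ENNReal.ofReal_ne_top h2
      _ = L := ENNReal.toReal_ofReal hL.le
  -- inverse square tail
  have heq : Set.EqOn (fun y : ℝ => y ^ (-2 : ℝ)) (fun y : ℝ => (y ^ 2)⁻¹) (Set.Ioi R) := by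
    intro y hy
    have hy0 : 0 < y := lt_trans hR0 hy
    simp only
    rw [Real.rpow_neg hy0.le, Real.rpow_two]
  have hinv_Ioi : ∫ y in Set.Ioi R, ((y : ℝ) ^ 2)⁻¹ = R⁻¹ := by
    rw [← setIntegral_congr_fun measurableSet_Ioi heq,
      integral_Ioi_rpow_of_lt (by norm_num) hR0,
      show (-2 : ℝ) + 1 = -1 by norm_num, Real.rpow_neg_one]
    ring
  have hinv_int_Ioi : IntegrableOn (fun y : ℝ => (y ^ 2)⁻¹) (Set.Ioi R) :=
    (integrableOn_Ioi_rpow_of_lt (by norm_num : (-2 : ℝ) < -1) hR0).congr_fun heq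
      measurableSet_Ioi
  have hinv_int_Iio : IntegrableOn (fun y : ℝ => (y ^ 2)⁻¹) (Set.Iio (-R)) := by
    rw [← Measure.map_neg_eq_self (volume : Measure ℝ)]
    have m : MeasurableEmbedding (Neg.neg : ℝ → ℝ) :=
      (Homeomorph.neg ℝ).measurableEmbedding
    rw [m.integrableOn_map_iff]
    have hset : (Neg.neg : ℝ → ℝ) ⁻¹' Set.Iio (-R) = Set.Ioi R := by
      ext x; simp
    rw [hset]
    have hfun : ((fun y : ℝ => (y ^ 2)⁻¹) ∘ (Neg.neg : ℝ → ℝ)) = fun y : ℝ => (y ^ 2)⁻¹ := by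
      funext x; simp [Function.comp]
    rw [hfun]; exact hinv_int_Ioi
  have hinv_Iio : ∫ y in Set.Iio (-R), ((y : ℝ) ^ 2)⁻¹ = R⁻¹ := by
    rw [← integral_Iic_eq_integral_Iio]
    have h := integral_comp_neg_Ioi R (fun y : ℝ => (y ^ 2)⁻¹)
    simp only [neg_sq] at h
    rw [← h, hinv_Ioi]
  have hcompl : sᶜ = Set.Iio (-R) ∪ Set.Ioi R := by
    rw [hs_def]; ext x
    simp only [Set.mem_compl_iff, Set.mem_Icc, Set.mem_union, Set.mem_Iio, Set.mem_Ioi,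
      not_and_or, not_le]
  have hdisj : Disjoint (Set.Iio (-R)) (Set.Ioi R) :=
    (Set.Iic_disjoint_Ioi (by linarith : -R ≤ R)).mono_left Set.Iio_subset_Iic_self
  have hinv_int_tail : IntegrableOn (fun y : ℝ => (y ^ 2)⁻¹) sᶜ := by
    rw [hcompl]; exact hinv_int_Iio.union hinv_int_Ioi
  have hinv_tail : ∫ y in sᶜ, ((y : ℝ) ^ 2)⁻¹ = 2 / R := by
    rw [hcompl, setIntegral_union hdisj measurableSet_Ioi hinv_int_Iio hinv_int_Ioi,
      hinv_Iio, hinv_Ioi]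
    rw [div_eq_mul_inv]; ring
  -- pointwise bound on the tail
  have claimB : ∀ y : ℝ, y ∈ sᶜ →
      |q y * Real.log (q y)| ≤ (K / l R + 4 / κ) * (l |y| * q y) + 2 * ((y : ℝ) ^ 2)⁻¹ := by
    intro y hy
    have hyR : R < |y| := by
      have : ¬ |y| ≤ R := fun h => hy ((hmem y).2 h)
      exact not_le.1 this
    have hy1 : 1 < |y| := lt_of_le_of_lt hR1 hyR
    have hy0 : y ≠ 0 := by intro h; rw [h, abs_zero] at hy1; linarith
    have hlRy : l R ≤ l |y| := hl_mono (Set.mem_Ici.2 hR0.le)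
      (Set.mem_Ici.2 (abs_nonneg y)) hyR.le
    have hly0 : 0 ≤ l |y| := hl_nonneg _ (abs_nonneg y)
    have hq0 := h0 y
    have hy2 : (1 : ℝ) < y ^ 2 := by nlinarith [sq_abs y]
    have hup : q y * Real.log (q y) ≤ K / l R * (l |y| * q y) := by
      have h1 : q y * Real.log (q y) ≤ q y * K := mul_log_le_K hq0 (hqM y)
      have e1 : K / l R * (l R * q y) = K * q y := by field_simp
      have e2 : K / l R * (l R * q y) ≤ K / l R * (l |y| * q y) :=
        mul_le_mul_of_nonneg_left (mul_le_mul_of_nonneg_right hlRy hq0)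
          (div_nonneg hK hlR.le)
      have h2' : K * q y ≤ K / l R * (l |y| * q y) := e1 ▸ e2
      linarith [mul_comm (q y) K]
    have hdown : -(q y * Real.log (q y)) ≤ 4 / κ * (l |y| * q y) + 2 * ((y : ℝ) ^ 2)⁻¹ := by
      by_cases hcase : q y ≤ (y ^ 2 * y ^ 2)⁻¹
      · have h1 : -(q y * Real.log (q y)) ≤ 2 * Real.sqrt (q y) :=
          neg_mul_log_le_two_sqrt hq0
        have h2 : Real.sqrt (q y) ≤ (y ^ 2)⁻¹ := by
          have hle : Real.sqrt (q y) ≤ Real.sqrt ((y ^ 2 * y ^ 2)⁻¹) :=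
            Real.sqrt_le_sqrt hcase
          have e : ((y : ℝ) ^ 2 * y ^ 2)⁻¹ = ((y ^ 2)⁻¹) ^ 2 := by
            rw [mul_inv]; ring
          rw [e, Real.sqrt_sq (by positivity)] at hle
          exact hle
        have h3 : 0 ≤ 4 / κ * (l |y| * q y) := by positivity
        linarith
      · push_neg at hcase
        have hqpos : 0 < q y := lt_trans (by positivity) hcase
        have hlog : -Real.log (q y) ≤ 4 * Real.log |y| := by
          have h1 : Real.log ((y ^ 2 * y ^ 2)⁻¹) ≤ Real.log (q y) :=
            Real.log_le_log (by positivity) hcase.le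
          have h2 : Real.log (((y : ℝ) ^ 2 * y ^ 2)⁻¹) = -(4 * Real.log |y|) := by
            rw [Real.log_inv]
            have e : ((y : ℝ) ^ 2 * y ^ 2) = |y| ^ 4 := by
              rw [← sq_abs]; ring
            rw [e, Real.log_pow]; push_cast; ring
          linarith
        have h4 : 4 * Real.log |y| ≤ 4 / κ * l |y| := by
          have h5 : Real.log |y| ≤ l |y| / κ := by
            rw [le_div_iff₀ hκ]
            linarith [hc |y| hyR.le, mul_comm κ (Real.log |y|)]
          have e : 4 * (l |y| / κ) = 4 / κ * l |y| := by ring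
          linarith
        have h6 : -(q y * Real.log (q y)) ≤ q y * (4 / κ * l |y|) := by
          have h7 : -Real.log (q y) ≤ 4 / κ * l |y| := le_trans hlog h4
          calc -(q y * Real.log (q y)) = q y * (-Real.log (q y)) := by ring
            _ ≤ q y * (4 / κ * l |y|) := mul_le_mul_of_nonneg_left h7 hq0
        have h8 : (0 : ℝ) ≤ 2 * ((y : ℝ) ^ 2)⁻¹ := by positivity
        have e : q y * (4 / κ * l |y|) = 4 / κ * (l |y| * q y) := by ring
        linarith
    have hA : 0 ≤ K / l R * (l |y| * q y) := by positivity
    have hB : 0 ≤ 4 / κ * (l |y| * q y) + 2 * ((y : ℝ) ^ 2)⁻¹ := by positivity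
    have e : (K / l R + 4 / κ) * (l |y| * q y)
        = K / l R * (l |y| * q y) + 4 / κ * (l |y| * q y) := by ring
    rw [abs_le]
    constructor <;> [linarith; linarith]
  -- integrability of the entropy integrand
  have hφ_meas : AEStronglyMeasurable (fun y => q y * Real.log (q y)) volume :=
    (hq.mul (Real.measurable_log.comp hq)).aestronglyMeasurable
  set CM : ℝ := M * K + 1 with hCM_def
  have hφ_bound : ∀ y, |q y * Real.log (q y)| ≤ CM := fun y =>
    abs_mul_log_le (h0 y) (hqM y)
  set G : ℝ → ℝ := fun y =>
    if |y| ≤ R then CM else (K / l R + 4 / κ) * (l |y| * q y) + 2 * ((y : ℝ) ^ 2)⁻¹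
    with hG_def
  have hRHS_int : IntegrableOn
      (fun y : ℝ => (K / l R + 4 / κ) * (l |y| * q y) + 2 * ((y : ℝ) ^ 2)⁻¹) sᶜ :=
    ((hlq_int.const_mul _).integrableOn).add (hinv_int_tail.const_mul 2)
  have hG_int : Integrable G := by
    have h1 : G = s.indicator (fun _ => CM) +
        sᶜ.indicator (fun y => (K / l R + 4 / κ) * (l |y| * q y) + 2 * ((y : ℝ) ^ 2)⁻¹) := by
      funext y
      by_cases hy : |y| ≤ R
      · have hys : y ∈ s := (hmem y).2 hy
        simp [hG_def, hy, Set.indicator_of_mem hys,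
          Set.indicator_of_notMem (by simpa using hys : y ∉ sᶜ)]
      · have hys : y ∉ s := fun h => hy ((hmem y).1 h)
        simp [hG_def, hy, Set.indicator_of_notMem hys,
          Set.indicator_of_mem (by simpa using hys : y ∈ sᶜ)]
    rw [h1]
    refine Integrable.add ?_ ?_
    · rw [integrable_indicator_iff hs]
      exact integrableOn_const measure_Icc_lt_top.ne
    · rw [integrable_indicator_iff hs.compl]
      exact hRHS_int
  have hφ_int : Integrable (fun y => q y * Real.log (q y)) := by
    refine hG_int.mono' hφ_meas (Filter.Eventually.of_forall fun y => ?_)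
    rw [Real.norm_eq_abs]
    by_cases hy : |y| ≤ R
    · simp only [hG_def, if_pos hy]; exact hφ_bound y
    · simp only [hG_def, if_neg hy]
      exact claimB y (by simpa [hmem y] using hy)
  refine ⟨hφ_int, ?_⟩
  calc ∫ y in sᶜ, |q y * Real.log (q y)|
      ≤ ∫ y in sᶜ, ((K / l R + 4 / κ) * (l |y| * q y) + 2 * ((y : ℝ) ^ 2)⁻¹) :=
        setIntegral_mono_on hφ_int.abs.integrableOn hRHS_int hs.compl claimB
    _ = (K / l R + 4 / κ) * (∫ y in sᶜ, l |y| * q y)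
        + 2 * ∫ y in sᶜ, ((y : ℝ) ^ 2)⁻¹ := by
        rw [integral_add ((hlq_int.const_mul _).integrableOn) (hinv_int_tail.const_mul 2),
          integral_const_mul, integral_const_mul]
    _ ≤ (K / l R + 4 / κ) * L + 2 * (2 / R) := by
        have hβ : 0 ≤ K / l R + 4 / κ := by positivity
        rw [hinv_tail]
        have := mul_le_mul_of_nonneg_left hlq_tail hβ
        linarith
    _ = (K / l R + 4 / κ) * L + 4 / R := by ring

/-- If the densities `p_m, p` are uniformly bounded (C1) and have a
uniformly bounded super-logarithmic moment (C2), then pointwise convergence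
`p_m → p` implies convergence of the differential entropies `h(p_m) → h(p)`. -/
theorem entropy_convergence_of_pointwise
    (p : ℝ → ℝ) (pm : ℕ → ℝ → ℝ)
    (hp : IsPDF p) (hpm : ∀ m : ℕ, 1 ≤ m → IsPDF (pm m))
    (M : ℝ) (hM : 0 < M)
    (hbp : ∀ y : ℝ, p y ≤ M) (hbpm : ∀ m : ℕ, 1 ≤ m → ∀ y : ℝ, pm m y ≤ M)
    (l : ℝ → ℝ) (hl_nonneg : ∀ x : ℝ, 0 ≤ x → 0 ≤ l x)
    (hl_mono : MonotoneOn l (Set.Ici 0)) (hl_super : SuperLog l)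
    (L : ℝ) (hL : 0 < L)
    (hmom : ∫⁻ y, ENNReal.ofReal (l |y| * p y) ≤ ENNReal.ofReal L)
    (hmomm : ∀ m : ℕ, 1 ≤ m → ∫⁻ y, ENNReal.ofReal (l |y| * pm m y) ≤ ENNReal.ofReal L)
    (hconv : ∀ y : ℝ, Tendsto (fun m => pm m y) atTop (𝓝 (p y))) :
    Tendsto (fun m => diffEntropy (pm m)) atTop (𝓝 (diffEntropy p)) := by
  obtain ⟨hp_meas, hp_nonneg, hp_int1⟩ := hp
  set K : ℝ := max (Real.log M) 0 with hK_def
  have hK : 0 ≤ K := le_max_right _ _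
  rw [Metric.tendsto_atTop]
  intro ε hε
  -- choose parameters
  set κ : ℝ := 36 * L / ε with hκ_def
  have hκpos : 0 < κ := by positivity
  obtain ⟨c, hc_pos, hc⟩ := hl_super κ hκpos
  obtain ⟨c₁, hc₁pos, hc₁⟩ := hl_super 1 one_pos
  set R : ℝ := max (max c c₁) (max 3 (max (36 / ε) (Real.exp (9 * (K + 1) * L / ε))))
    with hR_def
  have hRc : c ≤ R := le_trans (le_max_left c c₁) (le_max_left _ _)
  have hRc₁ : c₁ ≤ R := le_trans (le_max_right c c₁) (le_max_left _ _)
  have hR3 : (3 : ℝ) ≤ R := le_trans (le_max_left 3 _) (le_max_right _ _)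
  have hRε : 36 / ε ≤ R :=
    le_trans (le_trans (le_max_left _ _) (le_max_right 3 _)) (le_max_right _ _)
  have hRexp : Real.exp (9 * (K + 1) * L / ε) ≤ R :=
    le_trans (le_trans (le_max_right _ _) (le_max_right 3 _)) (le_max_right _ _)
  have hR1 : (1 : ℝ) ≤ R := by linarith
  have hR0 : (0 : ℝ) < R := by linarith
  have hlogR : 9 * (K + 1) * L / ε ≤ Real.log R := by
    have h := Real.log_le_log (Real.exp_pos _) hRexp
    rwa [Real.log_exp] at h
  have hlR_logR : Real.log R ≤ l R := by
    have := hc₁ R hRc₁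
    linarith
  have hnum_pos : (0 : ℝ) < 9 * (K + 1) * L / ε := by positivity
  have hlRpos : 0 < l R := by linarith
  have hcR : ∀ x : ℝ, R ≤ x → κ * Real.log x ≤ l x := fun x hx => hc x (le_trans hRc hx)
  -- numeric estimates
  have htail_num : (K / l R + 4 / κ) * L + 4 / R ≤ ε / 3 := by
    have h1 : K / l R * L ≤ ε / 9 := by
      rw [div_mul_eq_mul_div, div_le_iff₀ hlRpos]
      have h2 : ε / 9 * (9 * (K + 1) * L / ε) ≤ ε / 9 * l R := by
        apply mul_le_mul_of_nonneg_left _ (by positivity)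
        linarith
      have e : ε / 9 * (9 * (K + 1) * L / ε) = (K + 1) * L := by
        field_simp
      nlinarith
    have h2 : 4 / κ * L = ε / 9 := by
      rw [hκ_def]; field_simp; ring
    have h3 : 4 / R ≤ ε / 9 := by
      rw [div_le_iff₀ hR0]
      have h4 : ε / 9 * (36 / ε) ≤ ε / 9 * R := by
        apply mul_le_mul_of_nonneg_left hRε (by positivity)
      have e : ε / 9 * (36 / ε) = 4 := by field_simp; ring
      linarith
    have e : (K / l R + 4 / κ) * L = K / l R * L + 4 / κ * L := by ring
    linarith
  -- tail bounds
  set s : Set ℝ := Set.Icc (-R) R with hs_def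
  have hs : MeasurableSet s := measurableSet_Icc
  obtain ⟨hp_phi_int, hp_tail⟩ := tail_key M L hM hL l hl_nonneg hl_mono p hp_meas
    hp_nonneg hbp hmom κ R hκpos hR1 hlRpos hcR
  have hp_tail' : ∫ y in sᶜ, |p y * Real.log (p y)| ≤ ε / 3 := le_trans hp_tail htail_num
  have hpm_tail : ∀ m : ℕ, 1 ≤ m →
      Integrable (fun y => pm m y * Real.log (pm m y)) ∧
      ∫ y in sᶜ, |pm m y * Real.log (pm m y)| ≤ ε / 3 := by
    intro m hm
    obtain ⟨h1, h2⟩ := tail_key M L hM hL l hl_nonneg hl_mono (pm m) (hpm m hm).1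
      (hpm m hm).2.1 (hbpm m hm) (hmomm m hm) κ R hκpos hR1 hlRpos hcR
    exact ⟨h1, le_trans h2 htail_num⟩
  -- dominated convergence on the compact part
  have hDCT : Tendsto (fun m => ∫ y in s, pm m y * Real.log (pm m y)) atTop
      (𝓝 (∫ y in s, p y * Real.log (p y))) := by
    apply tendsto_integral_filter_of_dominated_convergence (fun _ => M * K + 1)
    · filter_upwards [eventually_ge_atTop 1] with m hm
      exact ((hpm m hm).1.mul (Real.measurable_log.comp (hpm m hm).1)).aestronglyMeasurable
    · filter_upwards [eventually_ge_atTop 1] with m hm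
      refine Filter.Eventually.of_forall fun y => ?_
      rw [Real.norm_eq_abs]
      exact abs_mul_log_le ((hpm m hm).2.1 y) (hbpm m hm y)
    · exact integrableOn_const measure_Icc_lt_top.ne
    · refine Filter.Eventually.of_forall fun y => ?_
      exact (Real.continuous_mul_log.continuousAt).tendsto.comp (hconv y)
  obtain ⟨N₀, hN₀⟩ := (Metric.tendsto_atTop.1 hDCT) (ε / 3) (by positivity)
  refine ⟨max N₀ 1, fun m hm => ?_⟩
  have hm1 : 1 ≤ m := le_trans (le_max_right _ _) hm
  have hmN : N₀ ≤ m := le_trans (le_max_left _ _) hm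
  obtain ⟨hpm_int, hpm_t⟩ := hpm_tail m hm1
  have hsplit_p : (∫ y, p y * Real.log (p y))
      = (∫ y in s, p y * Real.log (p y)) + ∫ y in sᶜ, p y * Real.log (p y) :=
    (integral_add_compl hs hp_phi_int).symm
  have hsplit_m : (∫ y, pm m y * Real.log (pm m y))
      = (∫ y in s, pm m y * Real.log (pm m y)) + ∫ y in sᶜ, pm m y * Real.log (pm m y) :=
    (integral_add_compl hs hpm_int).symm
  have habs_m : |∫ y in sᶜ, pm m y * Real.log (pm m y)| ≤ ε / 3 := by
    refine le_trans ?_ hpm_t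
    have h := norm_integral_le_integral_norm (μ := volume.restrict sᶜ)
      (fun y => pm m y * Real.log (pm m y))
    simp only [Real.norm_eq_abs] at h
    exact h
  have habs_p : |∫ y in sᶜ, p y * Real.log (p y)| ≤ ε / 3 := by
    refine le_trans ?_ hp_tail'
    have h := norm_integral_le_integral_norm (μ := volume.restrict sᶜ)
      (fun y => p y * Real.log (p y))
    simp only [Real.norm_eq_abs] at h
    exact h
  have hd := hN₀ m hmN
  rw [Real.dist_eq] at hd
  rw [Real.dist_eq]
  have e : diffEntropy (pm m) - diffEntropy p
      = ((∫ y in s, p y * Real.log (p y)) - ∫ y in s, pm m y * Real.log (pm m y))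
        + ((∫ y in sᶜ, p y * Real.log (p y)) - ∫ y in sᶜ, pm m y * Real.log (pm m y)) := by
    simp only [diffEntropy]
    rw [hsplit_p, hsplit_m]; ring
  rw [e]
  have h1 : |((∫ y in s, p y * Real.log (p y)) - ∫ y in s, pm m y * Real.log (pm m y))
        + ((∫ y in sᶜ, p y * Real.log (p y)) - ∫ y in sᶜ, pm m y * Real.log (pm m y))|
      ≤ |(∫ y in s, p y * Real.log (p y)) - ∫ y in s, pm m y * Real.log (pm m y)|
        + |(∫ y in sᶜ, p y * Real.log (p y)) - ∫ y in sᶜ, pm m y * Real.log (pm m y)| :=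
    abs_add_le _ _
  have h2 : |(∫ y in s, p y * Real.log (p y)) - ∫ y in s, pm m y * Real.log (pm m y)|
      < ε / 3 := by
    rw [abs_sub_comm]; exact hd
  have h3 : |(∫ y in sᶜ, p y * Real.log (p y)) - ∫ y in sᶜ, pm m y * Real.log (pm m y)|
      ≤ ε / 3 + ε / 3 := by
    refine le_trans (abs_sub _ _) ?_
    exact add_le_add habs_p habs_m
  linarith
end

section
/- Let p be a probability density function on ℝ with p(y) ≤ 1 for all y, let l : [0,∞) → [0,∞) be non-negative and non-decreasing with ∫ l(|y|) p(y) dy ≤ L for some finite L > 0, and let ỹ > 0 satisfy l(ỹ) > 0. Then the tail entropy integral satisfies −∫_{|y| ≥ ỹ} p(y) ln p(y) dy ≤ (L ln π)/l(ỹ) + 2L · sup_{|y| ≥ ỹ} [ ln(1+|y|) / l(|y|) ] + (1/e) · (ln 4)/ln(1+ỹ²). -/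
open MeasureTheory Real Filter Topology
open scoped ENNReal NNReal

lemma log_repr (y : ℝ) : Real.log (1+y^2) = ∫ u in (0:ℝ)..1, 2*u*y^2/(1+(u*y)^2) := by
  have h : ∀ u ∈ Set.uIcc (0:ℝ) 1, HasDerivAt (fun u : ℝ => Real.log (1+(u*y)^2))
      (2*u*y^2/(1+(u*y)^2)) u := by
    intro u _
    have h1 : (0:ℝ) < 1 + (u*y)^2 := by positivity
    have hd : HasDerivAt (fun u : ℝ => 1+(u*y)^2) (2*u*y^2) u := by
      have h0 : HasDerivAt (fun u : ℝ => u*y) (1*y) u := (hasDerivAt_id u).mul_const y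
      have := ((h0.fun_pow 2).const_add 1)
      refine this.congr_deriv ?_
      ring
    exact hd.log h1.ne'
  have hc : IntervalIntegrable (fun u : ℝ => 2*u*y^2/(1+(u*y)^2)) volume 0 1 := by
    apply Continuous.intervalIntegrable
    exact (continuous_const.mul continuous_id |>.mul continuous_const).div
      (by continuity) (fun u => by positivity)
  rw [intervalIntegral.integral_eq_sub_of_hasDerivAt h hc]
  simp


lemma inner_int (u : ℝ) (hu0 : 0 < u) (hu1 : u < 1) :
    ∫⁻ y : ℝ, ENNReal.ofReal (2*u*y^2 / ((1+(u*y)^2)*(1+y^2)))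
      = ENNReal.ofReal (2*π/(1+u)) := by
  have h1 : ∀ y : ℝ, (0:ℝ) < 1 + (u*y)^2 := fun y => by positivity
  have h2 : ∀ y : ℝ, (0:ℝ) < 1 + y^2 := fun y => by positivity
  have hu2 : (1:ℝ) - u^2 ≠ 0 := by nlinarith
  have hid : ∀ y : ℝ, 2*u*y^2 / ((1+(u*y)^2)*(1+y^2))
      = (2*u/(1-u^2)) * ((1+(u*y)^2)⁻¹ - (1+y^2)⁻¹) := by
    intro y
    have := (h1 y).ne'
    have := (h2 y).ne'
    field_simp
    ring
  have hint1 : Integrable (fun y : ℝ => (1+(u*y)^2)⁻¹) :=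
    integrable_inv_one_add_sq.comp_mul_left' hu0.ne'
  have hint : Integrable (fun y : ℝ => 2*u*y^2 / ((1+(u*y)^2)*(1+y^2))) := by
    simp_rw [hid]
    exact (hint1.sub integrable_inv_one_add_sq).const_mul _
  have hval1 : ∫ y : ℝ, (1+(u*y)^2)⁻¹ = π / u := by
    have := MeasureTheory.Measure.integral_comp_mul_left (fun x : ℝ => (1+x^2)⁻¹) u
    rw [integral_univ_inv_one_add_sq] at this
    rw [this, abs_of_pos (inv_pos.2 hu0), smul_eq_mul]
    rw [inv_mul_eq_div]
  have hval : ∫ y : ℝ, 2*u*y^2 / ((1+(u*y)^2)*(1+y^2)) = 2*π/(1+u) := by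
    simp_rw [hid]
    rw [integral_const_mul, integral_sub hint1 integrable_inv_one_add_sq,
      hval1, integral_univ_inv_one_add_sq]
    have hu1' : (1:ℝ) + u ≠ 0 := by nlinarith
    field_simp
    ring
  rw [← hval]
  rw [← ofReal_integral_eq_lintegral_ofReal hint]
  filter_upwards with y
  positivity

lemma cauchy_lint : ∫⁻ y : ℝ, ENNReal.ofReal (Real.log (1+y^2)/(1+y^2))
    = ENNReal.ofReal (2*π*Real.log 2) := by
  have hcf : Continuous (fun q : ℝ × ℝ => 2*q.2*q.1^2 / ((1+(q.2*q.1)^2)*(1+q.1^2))) := by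
    apply Continuous.div (by continuity) (by continuity)
    intro q
    positivity
  have step1 : ∀ y : ℝ, ENNReal.ofReal (Real.log (1+y^2)/(1+y^2))
      = ∫⁻ u in Set.Ioc (0:ℝ) 1, ENNReal.ofReal (2*u*y^2 / ((1+(u*y)^2)*(1+y^2))) := by
    intro y
    have hy : (0:ℝ) < 1 + y^2 := by positivity
    have hre : Real.log (1+y^2)/(1+y^2)
        = ∫ u in Set.Ioc (0:ℝ) 1, 2*u*y^2 / ((1+(u*y)^2)*(1+y^2)) := by
      rw [← intervalIntegral.integral_of_le (zero_le_one), log_repr y,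
        ← intervalIntegral.integral_div]
      congr 1; ext u
      rw [div_div]
    have hcy : Continuous (fun u : ℝ => 2*u*y^2 / ((1+(u*y)^2)*(1+y^2))) := by
      apply Continuous.div (by continuity) (by continuity)
      intro u; positivity
    rw [hre, ← ofReal_integral_eq_lintegral_ofReal]
    · exact hcy.integrableOn_Ioc
    · apply ae_restrict_of_forall_mem measurableSet_Ioc
      intro u hu
      have hu0 : (0:ℝ) ≤ u := hu.1.le
      positivity
  simp_rw [step1]
  rw [lintegral_lintegral_swap]
  · rw [Measure.restrict_congr_set Ioo_ae_eq_Ioc.symm]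
    rw [setLIntegral_congr_fun measurableSet_Ioo
      (fun u hu => inner_int u hu.1 hu.2)]
    have hint : IntegrableOn (fun u : ℝ => 2*π/(1+u)) (Set.Ioo 0 1) := by
      apply (ContinuousOn.integrableOn_Icc ?_).mono_set Set.Ioo_subset_Icc_self
      apply ContinuousOn.div continuousOn_const (by fun_prop)
      intro u hu
      nlinarith [hu.1]
    rw [← ofReal_integral_eq_lintegral_ofReal hint]
    · congr 1
      have : ∫ u in Set.Ioo (0:ℝ) 1, 2*π/(1+u) = ∫ u in (0:ℝ)..1, 2*π/(1+u) := by
        rw [intervalIntegral.integral_of_le zero_le_one,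
          ← MeasureTheory.integral_Ioc_eq_integral_Ioo]
      rw [this]
      have hder : ∀ u ∈ Set.uIcc (0:ℝ) 1, HasDerivAt (fun u : ℝ => 2*π*Real.log (1+u))
          (2*π/(1+u)) u := by
        intro u hu
        rw [Set.uIcc_of_le zero_le_one] at hu
        have h1 : (0:ℝ) < 1 + u := by linarith [hu.1]
        have hd : HasDerivAt (fun u : ℝ => 1+u) 1 u := (hasDerivAt_id u).const_add 1
        have := (hd.log h1.ne').const_mul (2*π)
        refine this.congr_deriv ?_
        field_simp
      have hci : IntervalIntegrable (fun u : ℝ => 2*π/(1+u)) volume 0 1 := by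
        rw [intervalIntegrable_iff_integrableOn_Ioo_of_le zero_le_one]
        exact hint
      rw [intervalIntegral.integral_eq_sub_of_hasDerivAt hder hci]
      norm_num
    · apply ae_restrict_of_forall_mem measurableSet_Ioo
      intro u hu
      have h1 : (0:ℝ) < 1 + u := by linarith [hu.1]
      positivity
  · apply Continuous.aemeasurable
    have : Continuous (fun q : ℝ × ℝ => 2*q.2*q.1^2 / ((1+(q.2*q.1)^2)*(1+q.1^2))) := hcf
    exact ENNReal.continuous_ofReal.comp this

lemma pointwise_aux (ytil y : ℝ) (hytil : 0 < ytil) (hy : ytil ≤ |y|)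
    (a : ℝ) (ha0 : 0 ≤ a) :
    -(a * Real.log a) ≤ a * Real.log π + 2 * Real.log (1+|y|) * a
      + (Real.exp 1 * π * Real.log (1+ytil^2))⁻¹ * (Real.log (1+y^2)/(1+y^2)) := by
  have hD : 0 < Real.log (1+ytil^2) := Real.log_pos (by nlinarith)
  have hY : (0:ℝ) < 1 + y^2 := by positivity
  have hE : (0:ℝ) < Real.exp 1 := Real.exp_pos 1
  have hP := Real.pi_pos
  have hlogpi : 0 ≤ Real.log π := Real.log_nonneg (by nlinarith [Real.pi_gt_three])
  have habs : (0:ℝ) ≤ |y| := abs_nonneg y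
  have hlogy : 0 ≤ Real.log (1+|y|) := Real.log_nonneg (by linarith)
  have hlogY : 0 ≤ Real.log (1+y^2) := Real.log_nonneg (by nlinarith)
  have hyy : Real.log (1+ytil^2) ≤ Real.log (1+y^2) := by
    apply Real.log_le_log (by positivity)
    have : ytil^2 ≤ |y|^2 := by nlinarith
    nlinarith [sq_abs y]
  have key3 : (π * (1+y^2))⁻¹ / Real.exp 1
      ≤ (Real.exp 1 * π * Real.log (1+ytil^2))⁻¹ * (Real.log (1+y^2)/(1+y^2)) := by
    have e1 : (π * (1+y^2))⁻¹ / Real.exp 1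
        = (Real.log (1+ytil^2)) * ((Real.exp 1 * π * Real.log (1+ytil^2) * (1+y^2))⁻¹) := by
      field_simp
    have e2 : (Real.exp 1 * π * Real.log (1+ytil^2))⁻¹ * (Real.log (1+y^2)/(1+y^2))
        = (Real.log (1+y^2)) * ((Real.exp 1 * π * Real.log (1+ytil^2) * (1+y^2))⁻¹) := by
      field_simp
    rw [e1, e2]
    exact mul_le_mul_of_nonneg_right hyy (by positivity)
  rcases eq_or_lt_of_le ha0 with h0|h0
  · rw [← h0]
    simp only [neg_zero, zero_mul, mul_zero, zero_add, add_zero]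
    have : 0 ≤ (Real.exp 1 * π * Real.log (1+ytil^2))⁻¹ * (Real.log (1+y^2)/(1+y^2)) := by
      positivity
    linarith
  · have keyA : a * (Real.log ((π*(1+y^2))⁻¹) - Real.log a) ≤ (π*(1+y^2))⁻¹ / Real.exp 1 := by
      set q := (π*(1+y^2))⁻¹ with hq
      have hq0 : 0 < q := by positivity
      have hx : 0 < q / (a * Real.exp 1) := by positivity
      have hlog := Real.log_le_sub_one_of_pos hx
      rw [Real.log_div hq0.ne' (by positivity), Real.log_mul h0.ne' hE.ne', Real.log_exp] at hlog
      have h2 : Real.log q - Real.log a ≤ q / (a * Real.exp 1) := by linarith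
      calc a * (Real.log q - Real.log a) ≤ a * (q / (a * Real.exp 1)) :=
            mul_le_mul_of_nonneg_left h2 ha0
        _ = q / Real.exp 1 := by field_simp
    have keyC : Real.log (1+y^2) ≤ 2 * Real.log (1+|y|) := by
      have h1 : (1:ℝ)+y^2 ≤ (1+|y|)^2 := by nlinarith [sq_abs y]
      calc Real.log (1+y^2) ≤ Real.log ((1+|y|)^2) := Real.log_le_log hY h1
        _ = 2 * Real.log (1+|y|) := by rw [Real.log_pow]; push_cast; ring
    have hsplit : -(a * Real.log a)
        = a * (Real.log ((π*(1+y^2))⁻¹) - Real.log a) + a * (Real.log π + Real.log (1+y^2)) := by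
      have h3 : Real.log ((π*(1+y^2))⁻¹) = -(Real.log π + Real.log (1+y^2)) := by
        rw [Real.log_inv, Real.log_mul hP.ne' hY.ne']
      rw [h3]; ring
    rw [hsplit]
    have keyC' : a * (Real.log π + Real.log (1+y^2))
        ≤ a * Real.log π + 2 * Real.log (1+|y|) * a := by nlinarith
    linarith [keyA.trans key3]

/-- Tail-entropy bound: if `p ≤ 1` is a density with
`∫ l(|y|) p(y) dy ≤ L` for a non-negative non-decreasing `l`, and `l(ỹ) > 0`, then
`-∫_{|y| ≥ ỹ} p ln p ≤ L ln π / l(ỹ) + 2 L sup_{|y| ≥ ỹ} (ln(1+|y|)/l(|y|))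
  + (1/e)·ln 4 / ln(1+ỹ²)`
(the supremum is taken in `ℝ≥0∞`, as it may be infinite). -/
theorem tail_entropy_bound
    (p : ℝ → ℝ) (hp : IsPDF p) (hp1 : ∀ y : ℝ, p y ≤ 1)
    (l : ℝ → ℝ) (hl_nonneg : ∀ x : ℝ, 0 ≤ x → 0 ≤ l x)
    (hl_mono : MonotoneOn l (Set.Ici 0))
    (L : ℝ) (hL : 0 < L)
    (hmom : ∫⁻ y, ENNReal.ofReal (l |y| * p y) ≤ ENNReal.ofReal L)
    (ytil : ℝ) (hytil : 0 < ytil) (hlytil : 0 < l ytil) :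
    ∫⁻ y in {y : ℝ | ytil ≤ |y|}, ENNReal.ofReal (-(p y * Real.log (p y)))
      ≤ ENNReal.ofReal (L * Real.log π / l ytil)
        + 2 * ENNReal.ofReal L *
            (⨆ y : {y : ℝ // ytil ≤ |y|}, ENNReal.ofReal (Real.log (1 + |y.1|) / l |y.1|))
        + ENNReal.ofReal ((1 / Real.exp 1) * (Real.log 4 / Real.log (1 + ytil ^ 2))) := by
  set S := ⨆ y : {y : ℝ // ytil ≤ |y|}, ENNReal.ofReal (Real.log (1 + |y.1|) / l |y.1|) with hS
  set T : Set ℝ := {y : ℝ | ytil ≤ |y|} with hTdef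
  have hT : MeasurableSet T := (isClosed_le continuous_const continuous_abs).measurableSet
  -- dispatch the case S = ⊤
  rcases eq_top_or_lt_top S with hStop | hSlt
  · have h2L : (2 : ℝ≥0∞) * ENNReal.ofReal L ≠ 0 :=
      mul_ne_zero (by norm_num) (ENNReal.ofReal_pos.2 hL).ne'
    rw [hStop, ENNReal.mul_top h2L]
    simp
  have hSne : (2 : ℝ≥0∞) * S ≠ ⊤ := ENNReal.mul_ne_top (by norm_num) hSlt.ne
  -- constants
  have hD : 0 < Real.log (1+ytil^2) := Real.log_pos (by nlinarith)
  have hE : (0:ℝ) < Real.exp 1 := Real.exp_pos 1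
  have hP := Real.pi_pos
  have hlogpi : 0 ≤ Real.log π := Real.log_nonneg (by nlinarith [Real.pi_gt_three])
  set c : ℝ := (Real.exp 1 * π * Real.log (1+ytil^2))⁻¹ with hc
  have hc0 : 0 ≤ c := by positivity
  -- the three pieces
  set g1 : ℝ → ℝ≥0∞ := fun y => ENNReal.ofReal (p y * Real.log π) with hg1
  set g2 : ℝ → ℝ≥0∞ := fun y => ENNReal.ofReal (2 * Real.log (1+|y|) * p y) with hg2
  set g3 : ℝ → ℝ≥0∞ := fun y => ENNReal.ofReal (c * (Real.log (1+y^2)/(1+y^2))) with hg3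
  have hmg1 : Measurable g1 := (hp.1.mul measurable_const).ennreal_ofReal
  have hmg2 : Measurable g2 := by
    apply Measurable.ennreal_ofReal
    exact (measurable_const.mul (Real.measurable_log.comp
      (measurable_const.add measurable_abs))).mul hp.1
  -- step 1: pointwise bound and splitting
  have step1 : ∫⁻ y in T, ENNReal.ofReal (-(p y * Real.log (p y)))
      ≤ (∫⁻ y in T, g1 y) + (∫⁻ y in T, g2 y) + (∫⁻ y in T, g3 y) := by
    have hptw : ∫⁻ y in T, ENNReal.ofReal (-(p y * Real.log (p y)))
        ≤ ∫⁻ y in T, (g1 y + g2 y + g3 y) := by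
      apply lintegral_mono_ae
      apply ae_restrict_of_forall_mem hT
      intro y hy
      calc ENNReal.ofReal (-(p y * Real.log (p y)))
          ≤ ENNReal.ofReal ((p y * Real.log π) + (2 * Real.log (1+|y|) * p y)
              + (c * (Real.log (1+y^2)/(1+y^2)))) := by
            apply ENNReal.ofReal_le_ofReal
            have := pointwise_aux ytil y hytil hy (p y) (hp.2.1 y)
            linarith [this]
        _ ≤ g1 y + g2 y + g3 y := by
            refine le_trans (ENNReal.ofReal_add_le) ?_
            exact add_le_add_left ENNReal.ofReal_add_le _
    refine hptw.trans (le_of_eq ?_)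
    rw [lintegral_add_left (show Measurable (fun y => g1 y + g2 y) from hmg1.add hmg2), lintegral_add_left hmg1]
  refine step1.trans ?_
  -- Markov bound on ∫_T p
  have hMarkov : ∫⁻ y in T, ENNReal.ofReal (p y) ≤ ENNReal.ofReal (L / l ytil) := by
    have h1 : ENNReal.ofReal (l ytil) * ∫⁻ y in T, ENNReal.ofReal (p y)
        ≤ ENNReal.ofReal L := by
      rw [← lintegral_const_mul' _ _ ENNReal.ofReal_ne_top]
      calc ∫⁻ y in T, ENNReal.ofReal (l ytil) * ENNReal.ofReal (p y)
          ≤ ∫⁻ y in T, ENNReal.ofReal (l |y| * p y) := by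
            apply lintegral_mono_ae
            apply ae_restrict_of_forall_mem hT
            intro y hy
            rw [← ENNReal.ofReal_mul (hl_nonneg ytil hytil.le)]
            exact ENNReal.ofReal_le_ofReal (mul_le_mul_of_nonneg_right
              (hl_mono (Set.mem_Ici.2 hytil.le) (Set.mem_Ici.2 (abs_nonneg y)) hy)
              (hp.2.1 y))
        _ ≤ ∫⁻ y, ENNReal.ofReal (l |y| * p y) := setLIntegral_le_lintegral T _
        _ ≤ ENNReal.ofReal L := hmom
    have h2 : ∫⁻ y in T, ENNReal.ofReal (p y)
        ≤ ENNReal.ofReal L / ENNReal.ofReal (l ytil) := by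
      rw [ENNReal.le_div_iff_mul_le (Or.inl (ENNReal.ofReal_pos.2 hlytil).ne')
        (Or.inl ENNReal.ofReal_ne_top)]
      rw [mul_comm]
      exact h1
    rwa [← ENNReal.ofReal_div_of_pos hlytil] at h2
  -- Term 1
  have hterm1 : ∫⁻ y in T, g1 y ≤ ENNReal.ofReal (L * Real.log π / l ytil) := by
    have : ∫⁻ y in T, g1 y
        = ENNReal.ofReal (Real.log π) * ∫⁻ y in T, ENNReal.ofReal (p y) := by
      rw [← lintegral_const_mul' _ _ ENNReal.ofReal_ne_top]
      simp only [hg1]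
      congr 1; ext y
      rw [← ENNReal.ofReal_mul hlogpi, mul_comm]
    rw [this]
    calc ENNReal.ofReal (Real.log π) * ∫⁻ y in T, ENNReal.ofReal (p y)
        ≤ ENNReal.ofReal (Real.log π) * ENNReal.ofReal (L / l ytil) :=
          mul_le_mul_right hMarkov _
      _ = ENNReal.ofReal (L * Real.log π / l ytil) := by
          rw [← ENNReal.ofReal_mul hlogpi]
          congr 1; ring
  -- Term 2
  have hterm2 : ∫⁻ y in T, g2 y ≤ 2 * ENNReal.ofReal L * S := by
    have hptw2 : ∀ y ∈ T, g2 y ≤ (2 * S) * ENNReal.ofReal (l |y| * p y) := by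
      intro y hy
      have hly : 0 < l |y| :=
        lt_of_lt_of_le hlytil (hl_mono (Set.mem_Ici.2 hytil.le) (Set.mem_Ici.2 (abs_nonneg y)) hy)
      have hlogy : 0 ≤ Real.log (1+|y|) := Real.log_nonneg (by linarith [abs_nonneg y])
      have hh : 2 * Real.log (1+|y|) * p y
          = 2 * ((Real.log (1+|y|)/l |y|) * (l |y| * p y)) := by
        field_simp
      simp only [hg2]
      rw [hh, ENNReal.ofReal_mul (by norm_num : (0:ℝ) ≤ 2),
        ENNReal.ofReal_mul (div_nonneg hlogy hly.le), ENNReal.ofReal_ofNat]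
      rw [mul_assoc]
      apply mul_le_mul_right
      apply mul_le_mul_left
      exact le_iSup (fun z : {y : ℝ // ytil ≤ |y|} =>
        ENNReal.ofReal (Real.log (1 + |z.1|) / l |z.1|)) ⟨y, hy⟩
    calc ∫⁻ y in T, g2 y ≤ ∫⁻ y in T, (2 * S) * ENNReal.ofReal (l |y| * p y) :=
          lintegral_mono_ae (ae_restrict_of_forall_mem hT hptw2)
      _ = (2 * S) * ∫⁻ y in T, ENNReal.ofReal (l |y| * p y) :=
          lintegral_const_mul' _ _ hSne
      _ ≤ (2 * S) * ENNReal.ofReal L :=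
          mul_le_mul_right ((setLIntegral_le_lintegral T _).trans hmom) _
      _ = 2 * ENNReal.ofReal L * S := by ring
  -- Term 3
  have hterm3 : ∫⁻ y in T, g3 y
      ≤ ENNReal.ofReal ((1 / Real.exp 1) * (Real.log 4 / Real.log (1 + ytil ^ 2))) := by
    calc ∫⁻ y in T, g3 y ≤ ∫⁻ y, g3 y := setLIntegral_le_lintegral T _
      _ = ENNReal.ofReal c * ∫⁻ y, ENNReal.ofReal (Real.log (1+y^2)/(1+y^2)) := by
          rw [← lintegral_const_mul' _ _ ENNReal.ofReal_ne_top]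
          simp only [hg3]
          congr 1; ext y
          rw [← ENNReal.ofReal_mul hc0]
      _ = ENNReal.ofReal (c * (2*π*Real.log 2)) := by
          rw [cauchy_lint, ← ENNReal.ofReal_mul hc0]
      _ = ENNReal.ofReal ((1 / Real.exp 1) * (Real.log 4 / Real.log (1 + ytil ^ 2))) := by
          congr 1
          have h4 : Real.log 4 = 2 * Real.log 2 := by
            rw [show (4:ℝ) = 2^2 by norm_num, Real.log_pow]; push_cast; ring
          rw [h4, hc]
          field_simp
  exact add_le_add (add_le_add hterm1 hterm2) hterm3
end

section
/- For m ≥ 3 define the probability density p_m on ℝ by p_m(x) = 1 − 1/ln m for x ∈ [0,1], p_m(x) = (1/(ln m)²)·(1/x) for x ∈ (1, m], and p_m(x) = 0 otherwise; let p be the uniform density on [0,1]. Then p_m(x) → p(x) pointwise for every x ∈ (0,1) ∪ (1,∞), every p_m and p is bounded by 1, h(p) = 0, and h(p_m) = −(1 − 1/ln m) ln(1 − 1/ln m) + 2 ln(ln m)/ln m + 1/2, so that h(p_m) → 1/2 ≠ h(p) as m → ∞; in particular the differential entropies do not converge to the entropy of the pointwise limit. -/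
open MeasureTheory Real Filter Topology

/-- The density `p_m` of the counterexample: `1 - 1/ln m` on `[0,1]`,
`(1/(ln m)²)·(1/x)` on `(1,m]`, and `0` elsewhere. -/
noncomputable def pmEx (m : ℕ) (x : ℝ) : ℝ :=
  if 0 ≤ x ∧ x ≤ 1 then 1 - 1 / Real.log m
  else if 1 < x ∧ x ≤ (m : ℝ) then (1 / (Real.log m) ^ 2) * (1 / x)
  else 0

/-- The uniform density on `[0,1]`. -/
noncomputable def pUnif (x : ℝ) : ℝ := if 0 ≤ x ∧ x ≤ 1 then 1 else 0

lemma one_lt_logm {m : ℕ} (hm : 3 ≤ m) : 1 < Real.log m := by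
  have h3 : (3:ℝ) ≤ m := by exact_mod_cast hm
  have he : Real.exp 1 < (m:ℝ) := by
    calc Real.exp 1 < 2.7182818286 := Real.exp_one_lt_d9
    _ < 3 := by norm_num
    _ ≤ (m:ℝ) := h3
  calc (1:ℝ) = Real.log (Real.exp 1) := (Real.log_exp 1).symm
  _ < Real.log m := Real.log_lt_log (Real.exp_pos 1) he

lemma int_one_div (m : ℝ) (hm : 1 ≤ m) : ∫ x in (1:ℝ)..m, 1/x = Real.log m := by
  rw [integral_one_div (by intro h; rw [Set.uIcc_of_le hm] at h; linarith [h.1])]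
  simp

lemma int_log_div (m : ℝ) (hm : 1 ≤ m) :
    ∫ x in (1:ℝ)..m, Real.log x / x = (Real.log m)^2 / 2 := by
  have h := intervalIntegral.integral_eq_sub_of_hasDerivAt (a := 1) (b := m)
    (f := fun x => (Real.log x)^2 / 2) (f' := fun x => Real.log x / x)
    (fun x hx => by
      rw [Set.uIcc_of_le hm] at hx
      have hx0 : x ≠ 0 := by intro h; rw [h] at hx; linarith [hx.1]
      have h1 := ((Real.hasDerivAt_log hx0).pow 2).div_const 2
      refine h1.congr_deriv ?_
      norm_num; ring)
    (by
      apply ContinuousOn.intervalIntegrable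
      apply ContinuousOn.div (Real.continuousOn_log.mono ?_) continuousOn_id ?_
      · rw [Set.uIcc_of_le hm]; intro x hx; simp; intro h; rw [h] at hx; linarith [hx.1]
      · rw [Set.uIcc_of_le hm]; intro x hx; simp at hx ⊢; intro h; rw [h] at hx; linarith [hx.1])
  rw [h]; simp

lemma entropy_pm {m : ℕ} (hm : 3 ≤ m) :
    diffEntropy (pmEx m) =
      -(1 - 1 / Real.log m) * Real.log (1 - 1 / Real.log m)
        + 2 * Real.log (Real.log m) / Real.log m + 1 / 2 := by
  have hL : 1 < Real.log m := one_lt_logm hm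
  have hL0 : Real.log m ≠ 0 := by linarith
  have hLpos : 0 < Real.log m := by linarith
  have hm1 : (1:ℝ) ≤ (m:ℝ) := by
    have : (3:ℝ) ≤ (m:ℝ) := by exact_mod_cast hm
    linarith
  set L := Real.log (m:ℝ) with hLdef
  set c : ℝ := 1 - 1/L with hcdef
  set g : ℝ → ℝ := fun x => (1/L^2 * (1/x)) * Real.log (1/L^2 * (1/x)) with hgdef
  have hfi : (fun y => pmEx m y * Real.log (pmEx m y))
      = Set.indicator (Set.Icc 0 1) (fun _ => c * Real.log c)
        + Set.indicator (Set.Ioc 1 (m:ℝ)) g := by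
    funext y
    simp only [Pi.add_apply, Set.indicator_apply, Set.mem_Icc, Set.mem_Ioc, pmEx, hgdef,
      hcdef, hLdef]
    by_cases h1 : 0 ≤ y ∧ y ≤ 1
    · have h2 : ¬ (1 < y ∧ y ≤ (m:ℝ)) := by push_neg; intro h; linarith [h1.2]
      simp [h1, h2]
    · by_cases h2 : 1 < y ∧ y ≤ (m:ℝ)
      · simp [h1, h2]
      · simp [h1, h2]
  have hI1 : Integrable (Set.indicator (Set.Icc (0:ℝ) 1) (fun _ => c * Real.log c)) := by
    rw [integrable_indicator_iff measurableSet_Icc]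
    refine integrableOn_const ?_
    rw [Real.volume_Icc]
    exact ENNReal.ofReal_ne_top
  have hgc : ContinuousOn g (Set.Icc 1 (m:ℝ)) := by
    have hne : ∀ x ∈ Set.Icc (1:ℝ) (m:ℝ), x ≠ 0 := by
      intro x hx h; rw [h] at hx; exact absurd hx.1 (by norm_num)
    have hc1 : ContinuousOn (fun x : ℝ => 1/L^2 * (1/x)) (Set.Icc 1 (m:ℝ)) :=
      continuousOn_const.mul (continuousOn_const.div continuousOn_id hne)
    have harg : ∀ x ∈ Set.Icc (1:ℝ) (m:ℝ), 1/L^2 * (1/x) ≠ 0 := by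
      intro x hx
      have hx0 : 0 < x := lt_of_lt_of_le one_pos hx.1
      positivity
    exact hc1.mul (Real.continuousOn_log.comp hc1 (fun x hx => harg x hx))
  have hI2 : Integrable (Set.indicator (Set.Ioc (1:ℝ) (m:ℝ)) g) := by
    rw [integrable_indicator_iff measurableSet_Ioc]
    exact (hgc.integrableOn_Icc).mono_set Set.Ioc_subset_Icc_self
  have hint : ∫ y, pmEx m y * Real.log (pmEx m y)
      = c * Real.log c + ∫ y in Set.Ioc (1:ℝ) (m:ℝ), g y := by
    rw [hfi]
    have hadd : (Set.indicator (Set.Icc (0:ℝ) 1) (fun _ => c * Real.log c)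
        + Set.indicator (Set.Ioc (1:ℝ) (m:ℝ)) g)
        = fun y => Set.indicator (Set.Icc (0:ℝ) 1) (fun _ => c * Real.log c) y
          + Set.indicator (Set.Ioc (1:ℝ) (m:ℝ)) g y := rfl
    rw [hadd]
    rw [integral_add hI1 hI2, integral_indicator measurableSet_Icc,
      integral_indicator measurableSet_Ioc, setIntegral_const]
    rw [Real.volume_real_Icc]
    norm_num
  have hg2 : ∫ y in Set.Ioc (1:ℝ) (m:ℝ), g y = -(2 * Real.log L / L + 1/2) := by
    rw [← intervalIntegral.integral_of_le hm1]
    have heq : Set.EqOn g (fun x => (-(1/L^2)) * (2 * Real.log L * (1/x) + Real.log x / x))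
        (Set.uIcc 1 (m:ℝ)) := by
      intro x hx
      rw [Set.uIcc_of_le hm1] at hx
      have hx0 : 0 < x := lt_of_lt_of_le one_pos hx.1
      have hlog : Real.log (1/L^2 * (1/x)) = -(2 * Real.log L) - Real.log x := by
        rw [Real.log_mul (by positivity) (by positivity), Real.log_div one_ne_zero (by positivity),
          Real.log_div one_ne_zero (ne_of_gt hx0), Real.log_pow]
        push_cast
        simp
        ring
      simp only [hgdef, hlog]
      field_simp
      ring
    rw [intervalIntegral.integral_congr heq]
    have hInt1 : IntervalIntegrable (fun x : ℝ => 2 * Real.log L * (1/x)) volume 1 (m:ℝ) := by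
      apply ContinuousOn.intervalIntegrable
      apply continuousOn_const.mul
      apply continuousOn_const.div continuousOn_id
      rw [Set.uIcc_of_le hm1]; intro x hx h; simp only [id_eq] at h; rw [h] at hx; exact absurd hx.1 (by norm_num)
    have hInt2 : IntervalIntegrable (fun x : ℝ => Real.log x / x) volume 1 (m:ℝ) := by
      apply ContinuousOn.intervalIntegrable
      apply ContinuousOn.div (Real.continuousOn_log.mono ?_) continuousOn_id ?_
      · rw [Set.uIcc_of_le hm1]; intro x hx; simp; intro h; rw [h] at hx; linarith [hx.1]
      · rw [Set.uIcc_of_le hm1]; intro x hx h; simp only [id_eq] at h; rw [h] at hx; exact absurd hx.1 (by norm_num)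
    rw [intervalIntegral.integral_const_mul, intervalIntegral.integral_add hInt1 hInt2,
      intervalIntegral.integral_const_mul, int_one_div _ hm1, int_log_div _ hm1, ← hLdef]
    field_simp
  rw [diffEntropy, hint, hg2]
  ring

/-- The densities `pmEx m` converge pointwise (on `(0,1) ∪ (1,∞)`,
hence a.e.) to the uniform density on `[0,1]`, all densities are bounded by `1`,
`h(pUnif) = 0` while
`h(pmEx m) = -(1 - 1/ln m) ln(1 - 1/ln m) + 2 ln(ln m)/ln m + 1/2 → 1/2 ≠ 0`:
the differential entropies do not converge to the entropy of the pointwise limit. -/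
theorem entropy_not_convergent_counterexample :
    (∀ x ∈ Set.Ioo (0 : ℝ) 1 ∪ Set.Ioi (1 : ℝ),
        Tendsto (fun m : ℕ => pmEx m x) atTop (𝓝 (pUnif x))) ∧
    (∀ m : ℕ, 3 ≤ m → ∀ x : ℝ, pmEx m x ≤ 1) ∧
    (∀ x : ℝ, pUnif x ≤ 1) ∧
    diffEntropy pUnif = 0 ∧
    (∀ m : ℕ, 3 ≤ m →
        diffEntropy (pmEx m) =
          -(1 - 1 / Real.log m) * Real.log (1 - 1 / Real.log m)
            + 2 * Real.log (Real.log m) / Real.log m + 1 / 2) ∧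
    Tendsto (fun m : ℕ => diffEntropy (pmEx m)) atTop (𝓝 (1 / 2)) ∧
    (1 / 2 : ℝ) ≠ diffEntropy pUnif := by
  have hlogTop : Tendsto (fun m : ℕ => Real.log m) atTop atTop :=
    Real.tendsto_log_atTop.comp tendsto_natCast_atTop_atTop
  have hinv0 : Tendsto (fun m : ℕ => 1 / Real.log m) atTop (𝓝 0) := by
    simpa [one_div, Pi.inv_def] using hlogTop.inv_tendsto_atTop
  have hunif0 : diffEntropy pUnif = 0 := by
    have h : ∀ y : ℝ, pUnif y * Real.log (pUnif y) = 0 := by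
      intro y; unfold pUnif; split <;> simp
    simp [diffEntropy, h]
  refine ⟨?_, ?_, ?_, hunif0, fun m hm => entropy_pm hm, ?_, ?_⟩
  · rintro x (hx | hx)
    · have hx1 : 0 ≤ x ∧ x ≤ 1 := ⟨le_of_lt hx.1, le_of_lt hx.2⟩
      have hpm : ∀ m : ℕ, pmEx m x = 1 - 1 / Real.log m := by
        intro m; simp [pmEx, hx1]
      have hpu : pUnif x = 1 := by simp [pUnif, hx1]
      rw [hpu]
      simp only [hpm]
      have := (tendsto_const_nhds : Tendsto (fun _ : ℕ => (1:ℝ)) atTop (𝓝 1)).sub hinv0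
      simpa using this
    · have hx1 : (1:ℝ) < x := hx
      have hpu : pUnif x = 0 := by
        have hno : ¬ (0 ≤ x ∧ x ≤ 1) := by push_neg; intro _; linarith
        simp [pUnif, hno]
      rw [hpu]
      have hEv : ∀ᶠ m : ℕ in atTop, pmEx m x = (1 / (Real.log m)^2) * (1/x) := by
        filter_upwards [eventually_ge_atTop ⌈x⌉₊] with m hmx
        have hxm : x ≤ (m:ℝ) := le_trans (Nat.le_ceil x) (by exact_mod_cast hmx)
        have h1 : ¬ (0 ≤ x ∧ x ≤ 1) := by push_neg; intro _; linarith
        simp [pmEx, h1, hx1, hxm]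
      have hT : Tendsto (fun m : ℕ => (1 / (Real.log m)^2) * (1/x)) atTop (𝓝 0) := by
        have h2 : Tendsto (fun m : ℕ => (Real.log m)^2) atTop atTop :=
          (tendsto_pow_atTop (two_ne_zero)).comp hlogTop
        have := h2.inv_tendsto_atTop
        simpa [one_div] using (this.mul_const (1/x) : _)
      exact hT.congr' (hEv.mono fun m hm => hm.symm)
  · intro m hm x
    have hL : 1 < Real.log m := one_lt_logm hm
    unfold pmEx
    split
    · have : 0 < 1 / Real.log m := by positivity
      linarith
    · split
      · rename_i h1 h2
        have hx : (1:ℝ) < x := h2.1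
        have hLe1 : 1 / (Real.log m)^2 ≤ 1 := by
          rw [div_le_one (by positivity)]
          nlinarith
        have hLe2 : 1 / x ≤ 1 := by
          rw [div_le_one (by linarith)]; linarith
        calc 1 / (Real.log m)^2 * (1/x) ≤ 1 * 1 :=
          mul_le_mul hLe1 hLe2 (by positivity) (by norm_num)
        _ = 1 := by norm_num
      · norm_num
  · intro x; unfold pUnif; split <;> norm_num
  · have hEv : ∀ᶠ m : ℕ in atTop, diffEntropy (pmEx m) =
        -(1 - 1 / Real.log m) * Real.log (1 - 1 / Real.log m)
          + 2 * Real.log (Real.log m) / Real.log m + 1 / 2 := by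
      filter_upwards [eventually_ge_atTop 3] with m hm
      exact entropy_pm hm
    have h1 : Tendsto (fun m : ℕ => -(1 - 1 / Real.log m) * Real.log (1 - 1 / Real.log m))
        atTop (𝓝 0) := by
      have ha : Tendsto (fun m : ℕ => (1 : ℝ) - 1 / Real.log m) atTop (𝓝 1) := by
        have := (tendsto_const_nhds : Tendsto (fun _ : ℕ => (1:ℝ)) atTop (𝓝 1)).sub hinv0
        simpa using this
      have hb : Tendsto (fun m : ℕ => Real.log (1 - 1 / Real.log m)) atTop (𝓝 0) := by
        have := (Real.continuousAt_log one_ne_zero).tendsto.comp ha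
        simpa [Function.comp_def] using this
      have := (ha.neg.mul hb)
      simpa using this
    have h2 : Tendsto (fun m : ℕ => 2 * Real.log (Real.log m) / Real.log m) atTop (𝓝 0) := by
      have hd : Tendsto (fun y : ℝ => Real.log y / y) atTop (𝓝 0) := by
        have := Real.tendsto_pow_log_div_mul_add_atTop 1 0 1 one_ne_zero
        simpa using this
      have := (hd.comp hlogTop).const_mul 2
      simpa [mul_div_assoc, Function.comp] using this
    have hsum : Tendsto (fun m : ℕ =>
        -(1 - 1 / Real.log m) * Real.log (1 - 1 / Real.log m)
          + 2 * Real.log (Real.log m) / Real.log m + 1 / 2) atTop (𝓝 (1/2)) := by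
      have := (h1.add h2).add_const (1/2 : ℝ)
      simpa using this
    exact hsum.congr' (hEv.mono fun m hm => hm.symm)
  · rw [hunif0]; norm_num
end

section
/- For m ≥ 3 define the probability density p_m on ℝ by p_m(x) = 1 − 1/ln m for x ∈ [0,1], p_m(x) = (1/(ln m)²)·(1/x) for x ∈ (1, m], and p_m(x) = 0 otherwise. Then for every non-negative, non-decreasing, super-logarithmic function l : [0,∞) → [0,∞), one has sup_{m ≥ 3} ∫ l(|x|) p_m(x) dx = +∞. More precisely, for every κ > 0 there is a threshold such that ∫ l(|x|) p_m(x) dx ≥ (3/8)κ for all sufficiently large m. -/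
open MeasureTheory Real Filter Topology

/-- For every non-negative, non-decreasing, super-logarithmic
`l : [0,∞) → [0,∞)` the moments `∫ l(|x|) pmEx m (x) dx` are unbounded over `m ≥ 3`:
their supremum is `+∞`; more precisely, for every `κ > 0` one has
`∫ l(|x|) pmEx m (x) dx ≥ (3/8)κ` for all sufficiently large `m`. -/
theorem counterexample_superlog_moment_unbounded
    (l : ℝ → ℝ) (hl_nonneg : ∀ x : ℝ, 0 ≤ x → 0 ≤ l x)
    (hl_mono : MonotoneOn l (Set.Ici 0)) (hl_super : SuperLog l) :
    (⨆ m : {m : ℕ // 3 ≤ m}, ∫⁻ x, ENNReal.ofReal (l |x| * pmEx m.1 x)) = ⊤ ∧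
    ∀ κ : ℝ, 0 < κ → ∃ M₀ : ℕ, 3 ≤ M₀ ∧ ∀ m : ℕ, M₀ ≤ m →
      ENNReal.ofReal (3 / 8 * κ) ≤ ∫⁻ x, ENNReal.ofReal (l |x| * pmEx m x) := by
  have key : ∀ κ : ℝ, 0 < κ → ∃ M₀ : ℕ, 3 ≤ M₀ ∧ ∀ m : ℕ, M₀ ≤ m →
      ENNReal.ofReal (3 / 8 * κ) ≤ ∫⁻ x, ENNReal.ofReal (l |x| * pmEx m x) := by
    intro κ hκ
    obtain ⟨c, hc, hcl⟩ := hl_super κ hκ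
    set c₁ : ℝ := max c 2 with hc₁def
    have hc₁2 : (2:ℝ) ≤ c₁ := le_max_right _ _
    have hc₁1 : (1:ℝ) < c₁ := by linarith
    have hc₁0 : (0:ℝ) < c₁ := by linarith
    refine ⟨max 3 ⌈c₁ ^ 2⌉₊, le_max_left _ _, ?_⟩
    intro m hm
    have hm3 : 3 ≤ m := le_trans (le_max_left _ _) hm
    have hmc : c₁ ^ 2 ≤ (m : ℝ) :=
      le_trans (Nat.le_ceil _) (Nat.cast_le.mpr (le_trans (le_max_right _ _) hm))
    have hc₁m : c₁ ≤ (m : ℝ) := by nlinarith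
    have hm1 : (1:ℝ) < (m : ℝ) := lt_of_lt_of_le hc₁1 hc₁m
    have hL : 0 < Real.log m := Real.log_pos hm1
    have hLc : 0 < Real.log c₁ := Real.log_pos hc₁1
    have h2log : 2 * Real.log c₁ ≤ Real.log m := by
      have := Real.log_le_log (by positivity) hmc
      rwa [Real.log_pow, Nat.cast_ofNat] at this
    set L : ℝ := Real.log m with hLdef
    -- the comparison function
    set g : ℝ → ℝ := fun x => κ * Real.log x / (L ^ 2 * x) with hgdef
    have hcont : ContinuousOn g (Set.Icc c₁ (m:ℝ)) := by
      apply ContinuousOn.div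
      · exact continuousOn_const.mul (Real.continuousOn_log.mono (by
          intro x hx
          simp only [Set.mem_compl_iff, Set.mem_singleton_iff]
          intro h; rw [h] at hx; exact absurd hx.1 (by linarith)))
      · exact (continuousOn_const.mul continuousOn_id)
      · intro x hx
        have : 0 < x := lt_of_lt_of_le hc₁0 hx.1
        positivity
    have hII : IntervalIntegrable g volume c₁ (m:ℝ) := by
      apply ContinuousOn.intervalIntegrable
      rwa [Set.uIcc_of_le hc₁m]
    have hderiv : ∀ x ∈ Set.uIcc c₁ (m:ℝ),
        HasDerivAt (fun x => κ / (2 * L ^ 2) * (Real.log x) ^ 2) (g x) x := by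
      intro x hx
      rw [Set.uIcc_of_le hc₁m] at hx
      have hx0 : 0 < x := lt_of_lt_of_le hc₁0 hx.1
      have h1 : HasDerivAt (fun x => (Real.log x) ^ 2) (2 * Real.log x ^ 1 * x⁻¹) x :=
        (Real.hasDerivAt_log hx0.ne').pow 2
      have h2 := h1.const_mul (κ / (2 * L ^ 2))
      refine h2.congr_deriv ?_
      simp only [hgdef]
      field_simp
    have hint : ∫ x in c₁..(m:ℝ), g x
        = κ / (2 * L ^ 2) * L ^ 2 - κ / (2 * L ^ 2) * (Real.log c₁) ^ 2 := by
      rw [intervalIntegral.integral_eq_sub_of_hasDerivAt hderiv hII]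
    have hintg : IntegrableOn g (Set.Ioc c₁ (m:ℝ)) volume :=
      (intervalIntegrable_iff_integrableOn_Ioc_of_le hc₁m).mp hII
    calc ENNReal.ofReal (3 / 8 * κ)
        ≤ ENNReal.ofReal (∫ x in Set.Ioc c₁ (m:ℝ), g x) := by
          apply ENNReal.ofReal_le_ofReal
          rw [← intervalIntegral.integral_of_le hc₁m, hint]
          have hLc2 : (Real.log c₁) ^ 2 ≤ L ^ 2 / 4 := by nlinarith
          have hL2 : (0:ℝ) < L ^ 2 := by positivity
          have e1 : κ / (2 * L ^ 2) * L ^ 2 = κ / 2 := by field_simp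
          have e2 : κ / (2 * L ^ 2) * (Real.log c₁) ^ 2 ≤ κ / 8 := by
            rw [div_mul_eq_mul_div, div_le_div_iff₀ (by positivity) (by norm_num)]
            nlinarith [mul_le_mul_of_nonneg_left hLc2 hκ.le]
          linarith
      _ = ∫⁻ x in Set.Ioc c₁ (m:ℝ), ENNReal.ofReal (g x) := by
          apply MeasureTheory.ofReal_integral_eq_lintegral_ofReal hintg
          filter_upwards [ae_restrict_mem measurableSet_Ioc] with x hx
          have hx1 : 1 < x := lt_trans hc₁1 hx.1
          have hlx : 0 < Real.log x := Real.log_pos hx1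
          simp only [hgdef, Pi.zero_apply]
          positivity
      _ ≤ ∫⁻ x in Set.Ioc c₁ (m:ℝ), ENNReal.ofReal (l |x| * pmEx m x) := by
          apply lintegral_mono_ae
          rw [ae_restrict_iff' measurableSet_Ioc]
          filter_upwards with x hx
          apply ENNReal.ofReal_le_ofReal
          have hx1 : 1 < x := lt_trans hc₁1 hx.1
          have hx0 : 0 < x := lt_trans one_pos hx1
          have hp : pmEx m x = (1 / L ^ 2) * (1 / x) := by
            simp only [pmEx, hLdef]
            rw [if_neg (by push_neg; intro _; linarith), if_pos ⟨hx1, hx.2⟩]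
          have habs : |x| = x := abs_of_pos hx0
          have hlx : κ * Real.log x ≤ l x := hcl x (le_trans (le_max_left c 2) hx.1.le)
          rw [hp, habs]
          have hpm0 : 0 ≤ (1 / L ^ 2) * (1 / x) := by positivity
          calc g x = (κ * Real.log x) * ((1 / L ^ 2) * (1 / x)) := by
                simp only [hgdef]; field_simp
            _ ≤ l x * ((1 / L ^ 2) * (1 / x)) := mul_le_mul_of_nonneg_right hlx hpm0
      _ ≤ ∫⁻ x, ENNReal.ofReal (l |x| * pmEx m x) :=
          MeasureTheory.setLIntegral_le_lintegral _ _
  refine ⟨?_, key⟩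
  rw [iSup_eq_top]
  intro b hb
  set κ : ℝ := (b.toReal + 1) * 8 / 3 with hκdef
  have hκ : 0 < κ := by
    have := ENNReal.toReal_nonneg (a := b)
    positivity
  obtain ⟨M₀, hM₀3, hM₀⟩ := key κ hκ
  refine ⟨⟨M₀, hM₀3⟩, lt_of_lt_of_le ?_ (hM₀ M₀ le_rfl)⟩
  rw [ENNReal.lt_ofReal_iff_toReal_lt hb.ne]
  rw [hκdef]
  ring_nf
  linarith
end

section
/- Consider the channel Y = f(X) + N and suppose assumptions A2, A3, A4, A5 and A8 hold, with cost function C and cost bound A > 0. Then there exist a non-negative, non-decreasing, super-logarithmic function l : [0,∞) → [0,∞) and a finite constant L (one may take L = L_N + A) such that for every input distribution F ∈ P_A, the output density satisfies ∫ l(|y|) p(y;F) dy ≤ L; i.e. the output densities induced by P_A have a uniformly bounded super-logarithmic moment. -/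
open MeasureTheory Real Filter Topology

/-- Output density `p(y;F) = ∫ p_N (y - f x) dF(x)` of the channel `Y = f(X) + N`. -/
noncomputable def outputDensity (pN f : ℝ → ℝ) (F : Measure ℝ) (y : ℝ) : ℝ :=
  ∫ x, pN (y - f x) ∂F

/-- Mutual information
`I(F) = ∬ p_N(y - f x) ln [p_N(y - f x) / p(y;F)] dy dF(x)` of the channel `Y = f(X)+N`. -/
noncomputable def mutualInfo (pN f : ℝ → ℝ) (F : Measure ℝ) : ℝ :=
  ∫ x, (∫ y, pN (y - f x) *
      Real.log (pN (y - f x) / outputDensity pN f F y)) ∂F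

/-- The constraint set `P_A` of probability distributions `F` on `ℝ` with
`∫ C(|x|) dF(x) ≤ A` (integral of the non-negative cost taken in `[0,∞]`),
as a subset of the space of probability measures with the topology of
weak convergence. -/
def PA (C : ℝ → ℝ) (A : ℝ) : Set (ProbabilityMeasure ℝ) :=
  {F | ∫⁻ x, ENNReal.ofReal (C |x|) ∂(F : Measure ℝ) ≤ ENNReal.ofReal A}

-- quick instance/elaboration checks

/-- Under A2, A3, A4, A5 and A8, there is a non-negative,
non-decreasing, super-logarithmic function `l` and a finite constant
`L = L_N + A` such that every output density induced by an input `F ∈ P_A`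
satisfies `∫ l(|y|) p(y;F) dy ≤ L`: the outputs have a uniformly bounded
super-logarithmic moment. -/
theorem output_superlog_moment_uniformly_bounded
    (f pN C : ℝ → ℝ) (A : ℝ) (hA : 0 < A)
    -- A2: the cost function is non-decreasing and non-negative
    (hA2_mono : MonotoneOn C (Set.Ici 0)) (hA2_nonneg : ∀ x : ℝ, 0 ≤ x → 0 ≤ C x)
    -- A3: `C(|x|) = ω(ln |f(x)|)`
    (hA3 : ∀ κ : ℝ, 0 < κ → ∃ c : ℝ, 0 < c ∧ ∀ x : ℝ, c ≤ |x| → κ * Real.log |f x| ≤ C |x|)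
    -- A4: `f` is continuous
    (hA4 : Continuous f)
    -- A5: `|f(x)|` is non-decreasing in `|x|` and `|f(x)| → ∞` as `|x| → ∞`
    (hA5_mono : ∀ x z : ℝ, |x| ≤ |z| → |f x| ≤ |f z|)
    (hA5_inf : Tendsto (fun x : ℝ => |f x|) (cocompact ℝ) atTop)
    -- the noise has a density
    (hpN : IsPDF pN)
    -- A8: noise super-logarithmic moment equal to `L_N < ∞`
    (CN : ℝ → ℝ) (hCN_mono : MonotoneOn CN (Set.Ici 0))
    (hCN_nonneg : ∀ x : ℝ, 0 ≤ x → 0 ≤ CN x) (hCN_super : SuperLog CN)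
    (LN : ℝ) (hLN : 0 ≤ LN)
    (hCN_mom : ∫⁻ n, ENNReal.ofReal (CN |n| * pN n) = ENNReal.ofReal LN) :
    ∃ l : ℝ → ℝ, (∀ x : ℝ, 0 ≤ x → 0 ≤ l x) ∧ MonotoneOn l (Set.Ici 0) ∧
      SuperLog l ∧
      ∀ F : ProbabilityMeasure ℝ, F ∈ PA C A →
        ∫⁻ y, ENNReal.ofReal (l |y| * outputDensity pN f (F : Measure ℝ) y)
          ≤ ENNReal.ofReal (LN + A) := by

  classical
  obtain ⟨hpN_meas, hpN_nonneg, hpN_int⟩ := hpN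
  -- `pN` is integrable (its Bochner integral is nonzero)
  have hpN_integrable : Integrable pN (volume : Measure ℝ) := by
    by_contra h
    rw [integral_undef h] at hpN_int
    norm_num at hpN_int
  have hpN_lint : ∫⁻ n, ENNReal.ofReal (pN n) = 1 := by
    rw [← ofReal_integral_eq_lintegral_ofReal hpN_integrable
      (Filter.Eventually.of_forall hpN_nonneg), hpN_int, ENNReal.ofReal_one]
  -- the auxiliary function `g`
  set S : ℝ → Set ℝ := fun t => {z : ℝ | t / 2 ≤ |f z|} with hS
  have hSne : ∀ t, (S t).Nonempty :=
    fun t => (hA5_inf.eventually (eventually_ge_atTop (t / 2))).exists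
  set g : ℝ → ℝ := fun t => sInf ((fun z => C |z|) '' S t) with hg
  have himg_ne : ∀ t, ((fun z => C |z|) '' S t).Nonempty := fun t => (hSne t).image _
  have hbdd : ∀ t, BddBelow ((fun z => C |z|) '' S t) := by
    intro t
    refine ⟨0, ?_⟩
    rintro r ⟨z, -, rfl⟩
    exact hA2_nonneg _ (abs_nonneg z)
  have g_nonneg : ∀ t, 0 ≤ g t := fun t =>
    le_csInf (himg_ne t) (by rintro r ⟨z, -, rfl⟩; exact hA2_nonneg _ (abs_nonneg z))
  have g_mono : Monotone g := by
    intro t t' htt'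
    refine csInf_le_csInf (hbdd t) (himg_ne t') (Set.image_mono ?_)
    intro z hz
    simp only [hS, Set.mem_setOf_eq] at hz ⊢
    linarith
  have g_le : ∀ x : ℝ, g (2 * |f x|) ≤ C |x| := by
    intro x
    refine csInf_le (hbdd _) ⟨x, ?_, rfl⟩
    simp only [hS, Set.mem_setOf_eq]
    linarith [abs_nonneg (f x)]
  -- the auxiliary function `CN'`
  set CN' : ℝ → ℝ := fun t => CN (max t 0 / 2) with hCN'
  have CN'_mono : Monotone CN' := by
    intro t t' h
    exact hCN_mono (div_nonneg (le_max_right t 0) (by norm_num))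
      (div_nonneg (le_max_right t' 0) (by norm_num))
      (by have := max_le_max h (le_refl (0:ℝ)); linarith)
  have CN'_abs : ∀ n : ℝ, CN' (2 * |n|) = CN |n| := by
    intro n
    simp only [hCN']
    rw [max_eq_left (by positivity)]
    ring_nf
  -- the function `l`
  set l : ℝ → ℝ := fun t => min (CN' t) (g t) with hl
  have l_mono : Monotone l := CN'_mono.min g_mono
  have l_nonneg : ∀ t : ℝ, 0 ≤ t → 0 ≤ l t := fun t ht =>
    le_min (hCN_nonneg _ (div_nonneg (le_max_right t 0) (by norm_num))) (g_nonneg t)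
  have l_meas : Measurable l := l_mono.measurable
  -- key pointwise bound
  have key : ∀ x n : ℝ, l |n + f x| ≤ CN |n| + C |x| := by
    intro x n
    rcases le_total |f x| |n| with hc | hc
    · have h1 : |n + f x| ≤ 2 * |n| := by
        calc |n + f x| ≤ |n| + |f x| := abs_add_le _ _
          _ ≤ 2 * |n| := by linarith
      have h2 : l |n + f x| ≤ CN |n| := by
        calc l |n + f x| ≤ l (2 * |n|) := l_mono h1
          _ ≤ CN' (2 * |n|) := min_le_left _ _
          _ = CN |n| := CN'_abs n
      linarith [hA2_nonneg _ (abs_nonneg x)]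
    · have h1 : |n + f x| ≤ 2 * |f x| := by
        calc |n + f x| ≤ |n| + |f x| := abs_add_le _ _
          _ ≤ 2 * |f x| := by linarith
      have h2 : l |n + f x| ≤ C |x| := by
        calc l |n + f x| ≤ l (2 * |f x|) := l_mono h1
          _ ≤ g (2 * |f x|) := min_le_right _ _
          _ ≤ C |x| := g_le x
      linarith [hCN_nonneg _ (abs_nonneg n)]
  -- `l` is super-logarithmic
  have l_super : SuperLog l := by
    intro κ hκ
    obtain ⟨c1, hc1, hC1⟩ := hA3 (2 * κ) (by positivity)
    obtain ⟨c2, hc2, hC2⟩ := hCN_super (2 * κ) (by positivity)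
    obtain ⟨M, hM⟩ : ∃ M : ℝ, ∀ z : ℝ, |z| ≤ c1 → |f z| ≤ M := by
      obtain ⟨M, hM⟩ := (isCompact_Icc.image (continuous_abs.comp hA4)).bddAbove
      refine ⟨M, fun z hz => hM ⟨z, ?_, rfl⟩⟩
      exact abs_le.mp hz
    refine ⟨max (max 4 (2 * c2)) (2 * M + 2), by positivity, ?_⟩
    intro t ht
    have ht4 : (4:ℝ) ≤ t := le_trans (le_trans (le_max_left _ _) (le_max_left _ _)) ht
    have htc2 : 2 * c2 ≤ t := le_trans (le_trans (le_max_right _ _) (le_max_left _ _)) ht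
    have htM : 2 * M + 2 ≤ t := le_trans (le_max_right _ _) ht
    have hlog : κ * Real.log t ≤ 2 * κ * Real.log (t / 2) := by
      have hlog2 : Real.log (t / 2) = Real.log t - Real.log 2 := by
        rw [Real.log_div (by linarith) (by norm_num)]
      have h4 : Real.log 4 ≤ Real.log t := Real.log_le_log (by norm_num) ht4
      have h42 : Real.log 4 = 2 * Real.log 2 := by
        rw [show (4:ℝ) = 2 ^ 2 by norm_num, Real.log_pow]; norm_num
      nlinarith
    refine le_min ?_ ?_
    · -- CN' part
      have h1 : CN' t = CN (t / 2) := by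
        simp only [hCN']; rw [max_eq_left (by linarith)]
      rw [h1]
      have := hC2 (t / 2) (by linarith)
      linarith
    · -- g part
      refine le_csInf (himg_ne t) ?_
      rintro r ⟨z, hz, rfl⟩
      simp only [hS, Set.mem_setOf_eq] at hz
      have hzc1 : c1 ≤ |z| := by
        by_contra hcon
        push_neg at hcon
        have := hM z hcon.le
        linarith
      have h1 := hC1 z hzc1
      have h2 : Real.log (t / 2) ≤ Real.log |f z| :=
        Real.log_le_log (by linarith) hz
      nlinarith
  refine ⟨l, l_nonneg, l_mono.monotoneOn _, l_super, ?_⟩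
  intro F hF
  have hFmem : ∫⁻ x, ENNReal.ofReal (C |x|) ∂(F : Measure ℝ) ≤ ENNReal.ofReal A := hF
  -- measurability facts
  have hCNabs_meas : Measurable fun n : ℝ => CN |n| := by
    have : (fun n : ℝ => CN |n|) = fun n => CN' (2 * |n|) := by
      funext n; rw [CN'_abs]
    rw [this]
    exact CN'_mono.measurable.comp (measurable_const.mul measurable_abs)
  have hmeas1 : Measurable fun n : ℝ => ENNReal.ofReal (CN |n| * pN n) :=
    (hCNabs_meas.mul hpN_meas).ennreal_ofReal
  -- step 1: pointwise bound on the output density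
  have step1 : ∀ y : ℝ, ENNReal.ofReal (l |y| * outputDensity pN f (F : Measure ℝ) y)
      ≤ ∫⁻ x, ENNReal.ofReal (l |y| * pN (y - f x)) ∂(F : Measure ℝ) := by
    intro y
    by_cases hi : Integrable (fun x => pN (y - f x)) (F : Measure ℝ)
    · rw [outputDensity, ENNReal.ofReal_mul (l_nonneg _ (abs_nonneg y)),
        ofReal_integral_eq_lintegral_ofReal hi
          (Filter.Eventually.of_forall fun x => hpN_nonneg _),
        ← lintegral_const_mul' _ _ ENNReal.ofReal_ne_top]
      refine le_of_eq (lintegral_congr fun x => ?_)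
      rw [ENNReal.ofReal_mul (l_nonneg _ (abs_nonneg y))]
    · rw [outputDensity, integral_undef hi, mul_zero, ENNReal.ofReal_zero]
      exact zero_le
  have hswap_meas : Measurable fun p : ℝ × ℝ =>
      ENNReal.ofReal (l |p.2| * pN (p.2 - f p.1)) :=
    ((l_meas.comp (measurable_abs.comp measurable_snd)).mul
      (hpN_meas.comp (measurable_snd.sub (hA4.measurable.comp measurable_fst)))).ennreal_ofReal
  calc ∫⁻ y, ENNReal.ofReal (l |y| * outputDensity pN f (F : Measure ℝ) y)
      ≤ ∫⁻ y, ∫⁻ x, ENNReal.ofReal (l |y| * pN (y - f x)) ∂(F : Measure ℝ) :=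
        lintegral_mono step1
    _ = ∫⁻ x, ∫⁻ y, ENNReal.ofReal (l |y| * pN (y - f x)) ∂(volume : Measure ℝ)
          ∂(F : Measure ℝ) :=
        (lintegral_lintegral_swap hswap_meas.aemeasurable).symm
    _ = ∫⁻ x, ∫⁻ n, ENNReal.ofReal (l |n + f x| * pN n) ∂(volume : Measure ℝ)
          ∂(F : Measure ℝ) := by
        refine lintegral_congr fun x => ?_
        rw [← lintegral_add_right_eq_self
          (fun y => ENNReal.ofReal (l |y| * pN (y - f x))) (f x)]
        exact lintegral_congr fun n => by simp
    _ ≤ ∫⁻ x, ∫⁻ n, ENNReal.ofReal ((CN |n| + C |x|) * pN n) ∂(volume : Measure ℝ)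
          ∂(F : Measure ℝ) := by
        refine lintegral_mono fun x => lintegral_mono fun n => ?_
        exact ENNReal.ofReal_le_ofReal
          (mul_le_mul_of_nonneg_right (key x n) (hpN_nonneg n))
    _ = ∫⁻ x, (ENNReal.ofReal LN + ENNReal.ofReal (C |x|)) ∂(F : Measure ℝ) := by
        refine lintegral_congr fun x => ?_
        have hsplit : ∀ n : ℝ, ENNReal.ofReal ((CN |n| + C |x|) * pN n)
            = ENNReal.ofReal (CN |n| * pN n) + ENNReal.ofReal (C |x| * pN n) := by
          intro n
          rw [add_mul, ENNReal.ofReal_add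
            (mul_nonneg (hCN_nonneg _ (abs_nonneg n)) (hpN_nonneg n))
            (mul_nonneg (hA2_nonneg _ (abs_nonneg x)) (hpN_nonneg n))]
        simp_rw [hsplit]
        rw [lintegral_add_left hmeas1, hCN_mom]
        congr 1
        simp_rw [ENNReal.ofReal_mul (hA2_nonneg _ (abs_nonneg x))]
        rw [lintegral_const_mul' _ _ ENNReal.ofReal_ne_top, hpN_lint, mul_one]
    _ = ENNReal.ofReal LN + ∫⁻ x, ENNReal.ofReal (C |x|) ∂(F : Measure ℝ) := by
        rw [lintegral_add_left measurable_const, lintegral_const, measure_univ, mul_one]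
    _ ≤ ENNReal.ofReal LN + ENNReal.ofReal A := add_le_add_right hFmem _
    _ = ENNReal.ofReal (LN + A) := (ENNReal.ofReal_add hLN hA.le).symm
end
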